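/- The following identities hold in A: (a) for every v ∈ V and e ∈ E, z^{γ_v} * u_e = (u_e − (γ e v)•1) * z^{γ_v}; (b) for every v ∈ V, z^{−γ_v} * z^{γ_v} = ∏_{e∈E} T_{e,v}, where T_{e,v} = ∏_{k=0}^{γ e v − 1}(u_e + k•1) if γ e v > 0, T_{e,v} = ∏_{m=1}^{|γ e v|}(u_e − m•1) if γ e v < 0, and T_{e,v} = 1 if γ e v = 0; (c) for every v ∈ V, z^{γ_v} * z^{−γ_v} = ∏_{e∈E} T'_{e,v}, where T'_{e,v} = ∏_{m=1}^{γ e v}(u_e − m•1) if γ e v > 0, T'_{e,v} = ∏_{k=0}^{|γ e v| − 1}(u_e + k•1) if γ e v < 0, and T'_{e,v} = 1 if γ e v = 0; (d) for all i, j ∈ V with i ≠ j, z^{γ_i} * z^{−γ_j} = z^{−γ_j} * z^{γ_i}. (These are exactly the twisted generalized Weyl relations showing that X_v ↦ z^{γ_v}, Y_v ↦ z^{−γ_v}, u_e ↦ y_e * x_e defines the canonical representation φ_Γ of the TGW algebra A(Γ) by differential operators.) -/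

import Mathlib

set_option linter.unusedSectionVars false

open MvPolynomial

variable {K : Type*} [Field K] {E : Type*} [Fintype E] [DecidableEq E]

noncomputable def Wx (K : Type*) [Field K] {E : Type*} (e : E) :
    Module.End K (MvPolynomial E K) :=
  LinearMap.mulLeft K (X e)

noncomputable def Wy (K : Type*) [Field K] {E : Type*} (e : E) :
    Module.End K (MvPolynomial E K) :=
  (pderiv e).toLinearMap

noncomputable def Wu (K : Type*) [Field K] {E : Type*} (e : E) :
    Module.End K (MvPolynomial E K) :=
  Wy K e * Wx K e

lemma pderiv_pderiv_comm (a b : E) (p : MvPolynomial E K) :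
    pderiv a (pderiv b p) = pderiv b (pderiv a p) := by
  induction p using MvPolynomial.induction_on with
  | C c => simp
  | add p q hp hq => simp [hp, hq]
  | mul_X p i hp =>
      by_cases hai : a = i
      · subst hai
        by_cases hbi : b = a
        · subst hbi; rfl
        · simp [pderiv_mul, pderiv_X_of_ne (Ne.symm hbi), hp]; ring
      · by_cases hbi : b = i
        · subst hbi
          simp [pderiv_mul, pderiv_X_of_ne (Ne.symm hai), hp]; ring
        · simp [pderiv_mul, pderiv_X_of_ne (Ne.symm hai), pderiv_X_of_ne (Ne.symm hbi), hp]

lemma commute_Wx_Wx (a b : E) : Commute (Wx K a) (Wx K b) := by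
  show _ = _
  apply LinearMap.ext; intro p
  simp [Wx, Module.End.mul_apply, mul_left_comm]

lemma commute_Wy_Wy (a b : E) : Commute (Wy K a) (Wy K b) := by
  show _ = _
  apply LinearMap.ext; intro p
  simpa [Wy, Module.End.mul_apply] using pderiv_pderiv_comm (K := K) a b p

lemma commute_Wy_Wx {a b : E} (h : a ≠ b) : Commute (Wy K a) (Wx K b) := by
  show _ = _
  apply LinearMap.ext; intro p
  simp [Wy, Wx, Module.End.mul_apply, pderiv_mul, pderiv_X_of_ne (Ne.symm h)]

/-- `z_e^{(p)}` -/
noncomputable def Wz (K : Type*) [Field K] {E : Type*} (e : E) (p : ℤ) :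
    Module.End K (MvPolynomial E K) :=
  if 0 ≤ p then Wx K e ^ p.toNat else Wy K e ^ (-p).toNat

lemma commute_Wz {a b : E} (h : a ≠ b) (p q : ℤ) :
    Commute (Wz K a p) (Wz K b q) := by
  unfold Wz
  split_ifs <;>
    exact Commute.pow_pow (by
      first
        | exact commute_Wx_Wx a b
        | exact commute_Wy_Wy a b
        | exact commute_Wy_Wx h
        | exact (commute_Wy_Wx h.symm).symm) _ _

/-- `z^k` for `k : E → ℤ` -/
noncomputable def Zpow (K : Type*) [Field K] {E : Type*} [Fintype E] [DecidableEq E]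
    (k : E → ℤ) : Module.End K (MvPolynomial E K) :=
  Finset.univ.noncommProd (fun e => Wz K e (k e))
    (fun a _ b _ hab => commute_Wz hab _ _)

lemma commute_aeval_aeval {A : Type*} [Ring A] [Algebra K A] {a b : A} (h : Commute a b)
    (p q : Polynomial K) : Commute (Polynomial.aeval a p) (Polynomial.aeval b q) := by
  rw [Polynomial.aeval_eq_sum_range, Polynomial.aeval_eq_sum_range]
  apply Commute.sum_left
  intro i _
  apply Commute.sum_right
  intro j _
  exact ((h.pow_pow i j).smul_left _).smul_right _

lemma commute_Wu (a b : E) : Commute (Wu K a) (Wu K b) := by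
  rcases eq_or_ne a b with rfl | h
  · rfl
  · exact Commute.mul_left
      ((commute_Wy_Wy a b).mul_right (commute_Wy_Wx h))
      (((commute_Wy_Wx h.symm).symm).mul_right (commute_Wx_Wx a b))

/-- The defining property of the incidence matrix of a multiquiver: every row has
at most one positive and at most one negative entry. -/
def CondM {V E : Type*} (γ : E → V → ℤ) : Prop :=
  ∀ e : E, (∀ v w : V, 0 < γ e v → 0 < γ e w → v = w) ∧
    (∀ v w : V, γ e v < 0 → γ e w < 0 → v = w)

/-- The polynomial giving `T_{e,v}`:
`∏_{k=0}^{c−1}(X + k)` if `c > 0`, `∏_{m=1}^{|c|}(X − m)` if `c < 0`, `1` if `c = 0`. -/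
noncomputable def Tpoly (K : Type*) [Field K] (c : ℤ) : Polynomial K :=
  if 0 < c then ∏ k ∈ Finset.range c.toNat, (Polynomial.X + Polynomial.C (k : K))
  else ∏ m ∈ Finset.range (-c).toNat, (Polynomial.X - Polynomial.C ((m : K) + 1))

/-- The polynomial giving `T'_{e,v}`:
`∏_{m=1}^{c}(X − m)` if `c > 0`, `∏_{k=0}^{|c|−1}(X + k)` if `c < 0`, `1` if `c = 0`. -/
noncomputable def Tpoly' (K : Type*) [Field K] (c : ℤ) : Polynomial K :=
  if 0 < c then ∏ m ∈ Finset.range c.toNat, (Polynomial.X - Polynomial.C ((m : K) + 1))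
  else ∏ k ∈ Finset.range (-c).toNat, (Polynomial.X + Polynomial.C (k : K))


section Aux
variable (e : E)

local notation "A" => Module.End K (MvPolynomial E K)

lemma Wx_mul_Wy : Wx K e * Wy K e = Wu K e - 1 := by
  apply LinearMap.ext; intro p
  simp [Wx, Wy, Wu, Module.End.mul_apply, LinearMap.sub_apply, pderiv_mul]

lemma Wx_mul_Wu : Wx K e * Wu K e = (Wu K e - 1) * Wx K e := by
  apply LinearMap.ext; intro p
  simp [Wx, Wy, Wu, Module.End.mul_apply, LinearMap.sub_apply, pderiv_mul]

lemma Wy_mul_Wu : Wy K e * Wu K e = (Wu K e + 1) * Wy K e := by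
  apply LinearMap.ext; intro p
  simp [Wx, Wy, Wu, Module.End.mul_apply, LinearMap.add_apply, pderiv_mul]

lemma Wx_pow_mul_Wu (n : ℕ) :
    Wx K e ^ n * Wu K e = (Wu K e - (n : A)) * Wx K e ^ n := by
  induction n with
  | zero => simp
  | succ n ih =>
      calc Wx K e ^ (n+1) * Wu K e = Wx K e ^ n * (Wx K e * Wu K e) := by
            rw [pow_succ, mul_assoc]
        _ = Wx K e ^ n * ((Wu K e - 1) * Wx K e) := by rw [Wx_mul_Wu]
        _ = (Wx K e ^ n * Wu K e) * Wx K e - Wx K e ^ (n+1) := by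
            rw [sub_mul, one_mul, mul_sub, ← mul_assoc, ← pow_succ]
        _ = ((Wu K e - (n : A)) * Wx K e ^ n) * Wx K e - Wx K e ^ (n+1) := by rw [ih]
        _ = (Wu K e - ((n+1 : ℕ) : A)) * Wx K e ^ (n+1) := by
            push_cast
            rw [mul_assoc, ← pow_succ, sub_mul, sub_mul, add_mul, one_mul]
            abel

lemma Wy_pow_mul_Wu (n : ℕ) :
    Wy K e ^ n * Wu K e = (Wu K e + (n : A)) * Wy K e ^ n := by
  induction n with
  | zero => simp
  | succ n ih =>
      calc Wy K e ^ (n+1) * Wu K e = Wy K e ^ n * (Wy K e * Wu K e) := by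
            rw [pow_succ, mul_assoc]
        _ = Wy K e ^ n * ((Wu K e + 1) * Wy K e) := by rw [Wy_mul_Wu]
        _ = (Wy K e ^ n * Wu K e) * Wy K e + Wy K e ^ (n+1) := by
            rw [add_mul, one_mul, mul_add, ← mul_assoc, ← pow_succ]
        _ = ((Wu K e + (n : A)) * Wy K e ^ n) * Wy K e + Wy K e ^ (n+1) := by rw [ih]
        _ = (Wu K e + ((n+1 : ℕ) : A)) * Wy K e ^ (n+1) := by
            push_cast
            rw [mul_assoc, ← pow_succ, add_mul, add_mul, add_mul, one_mul]
            abel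


lemma Wz_mul_Wu (p : ℤ) :
    Wz K e p * Wu K e = (Wu K e - (p : A)) * Wz K e p := by
  rcases le_or_gt 0 p with hp | hp
  · simp only [Wz, if_pos hp]
    rw [Wx_pow_mul_Wu]
    congr 2
    rw [← Int.toNat_of_nonneg hp]
    push_cast
    rw [Int.toNat_of_nonneg hp]
  · simp only [Wz, if_neg (not_le.mpr hp)]
    have h : ((-p).toNat : ℤ) = -p := Int.toNat_of_nonneg (by omega)
    rw [Wy_pow_mul_Wu, sub_eq_add_neg]
    congr 3
    rw [← Int.cast_natCast (R := Module.End K (MvPolynomial E K)), h, Int.cast_neg]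

lemma yx_pow (n : ℕ) :
    Wy K e ^ n * Wx K e ^ n =
      Polynomial.aeval (Wu K e)
        (∏ k ∈ Finset.range n, (Polynomial.X + Polynomial.C (k : K))) := by
  induction n with
  | zero => simp
  | succ n ih =>
      have h1 : Wy K e ^ (n+1) * Wx K e ^ (n+1)
          = Wy K e ^ n * Wu K e * Wx K e ^ n := by
        rw [pow_succ, pow_succ']
        simp only [Wu, mul_assoc]
      rw [h1, Wy_pow_mul_Wu, mul_assoc, ih, Finset.prod_range_succ, map_mul]
      have h2 : (Polynomial.aeval (Wu K e))
          (Polynomial.X + Polynomial.C ((n : K))) = Wu K e + (n : A) := by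
        simp
      rw [show (Polynomial.aeval (Wu K e))
            (∏ k ∈ Finset.range n, (Polynomial.X + Polynomial.C (k : K)))
            * (Polynomial.aeval (Wu K e)) (Polynomial.X + Polynomial.C ((n : K)))
          = (Polynomial.aeval (Wu K e)) (Polynomial.X + Polynomial.C ((n : K)))
            * (Polynomial.aeval (Wu K e))
              (∏ k ∈ Finset.range n, (Polynomial.X + Polynomial.C (k : K)))
        from (commute_aeval_aeval (Commute.refl _) _ _).symm.eq, h2]

lemma xy_pow (n : ℕ) :
    Wx K e ^ n * Wy K e ^ n =
      Polynomial.aeval (Wu K e)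
        (∏ m ∈ Finset.range n, (Polynomial.X - Polynomial.C ((m : K) + 1))) := by
  induction n with
  | zero => simp
  | succ n ih =>
      have h1 : Wx K e ^ (n+1) * Wy K e ^ (n+1)
          = Wx K e ^ n * (Wx K e * Wy K e) * Wy K e ^ n := by
        rw [pow_succ, pow_succ']
        simp only [mul_assoc]
      rw [h1, Wx_mul_Wy, mul_sub, mul_one, sub_mul, Wx_pow_mul_Wu, mul_assoc, ih,
        Finset.prod_range_succ, map_mul]
      have h2 : (Polynomial.aeval (Wu K e))
          (Polynomial.X - Polynomial.C ((n : K) + 1)) = Wu K e - ((n : A) + 1) := by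
        simp
      rw [show (Polynomial.aeval (Wu K e))
            (∏ m ∈ Finset.range n, (Polynomial.X - Polynomial.C ((m : K) + 1)))
            * (Polynomial.aeval (Wu K e)) (Polynomial.X - Polynomial.C ((n : K) + 1))
          = (Polynomial.aeval (Wu K e)) (Polynomial.X - Polynomial.C ((n : K) + 1))
            * (Polynomial.aeval (Wu K e))
              (∏ m ∈ Finset.range n, (Polynomial.X - Polynomial.C ((m : K) + 1)))
        from (commute_aeval_aeval (Commute.refl _) _ _).symm.eq, h2, ← ih]
      rw [sub_mul, sub_mul, sub_sub, add_mul, one_mul]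

end Aux

lemma Tpoly'_eq (c : ℤ) : Tpoly' K c = Tpoly K (-c) := by
  rcases lt_trichotomy c 0 with hc | rfl | hc
  · rw [Tpoly', if_neg (by omega), Tpoly, if_pos (by omega)]
  · simp [Tpoly', Tpoly]
  · rw [Tpoly', if_pos hc, Tpoly, if_neg (by omega), neg_neg]

lemma Wz_neg_mul_Wz (e : E) (c : ℤ) :
    Wz K e (-c) * Wz K e c = Polynomial.aeval (Wu K e) (Tpoly K c) := by
  rcases lt_trichotomy c 0 with hc | rfl | hc
  · rw [Wz, Wz, if_pos (by omega : (0:ℤ) ≤ -c), if_neg (by omega : ¬ (0:ℤ) ≤ c),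
      Tpoly, if_neg (by omega : ¬ (0:ℤ) < c)]
    exact xy_pow e (-c).toNat
  · simp [Wz, Tpoly]
  · rw [Wz, Wz, if_neg (by omega : ¬ (0:ℤ) ≤ -c), if_pos (by omega : (0:ℤ) ≤ c),
      Tpoly, if_pos hc, neg_neg]
    exact yx_pow e c.toNat

lemma Wz_mul_Wz_neg (e : E) (c : ℤ) :
    Wz K e c * Wz K e (-c) = Polynomial.aeval (Wu K e) (Tpoly' K c) := by
  rw [Tpoly'_eq]
  have := Wz_neg_mul_Wz (K := K) e (-c)
  rwa [neg_neg] at this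

lemma commute_Wz_Wu {a e : E} (h : a ≠ e) (p : ℤ) :
    Commute (Wz K a p) (Wu K e) := by
  have hx : Commute (Wx K a) (Wu K e) :=
    ((commute_Wy_Wx (Ne.symm h)).symm).mul_right (commute_Wx_Wx a e)
  have hy : Commute (Wy K a) (Wu K e) :=
    (commute_Wy_Wy a e).mul_right (commute_Wy_Wx h)
  rw [Wz]
  split_ifs
  · exact hx.pow_left _
  · exact hy.pow_left _

lemma commute_Wz_same (e : E) {p q : ℤ} (h : ¬(0 < p ∧ q < 0)) (h' : ¬(p < 0 ∧ 0 < q)) :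
    Commute (Wz K e p) (Wz K e q) := by
  rw [Wz, Wz]
  rcases le_or_gt 0 p with hp | hp <;> rcases le_or_gt 0 q with hq | hq
  · rw [if_pos hp, if_pos hq]; exact (Commute.refl _).pow_pow _ _
  · have hp0 : p = 0 := by omega
    subst hp0
    rw [if_pos le_rfl]
    simpa using Commute.one_left _
  · have hq0 : q = 0 := by omega
    subst hq0
    rw [if_pos le_rfl]
    simpa using Commute.one_right _
  · rw [if_neg (not_le.mpr hp), if_neg (not_le.mpr hq)]
    exact (Commute.refl _).pow_pow _ _

lemma Zpow_mul_Wu (k : E → ℤ) (e : E) :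
    Zpow K k * Wu K e
      = (Wu K e - ((k e : ℤ) : Module.End K (MvPolynomial E K))) * Zpow K k := by
  have h1 := Finset.noncommProd_erase_mul Finset.univ (Finset.mem_univ e)
      (fun a => Wz K a (k a)) (fun a _ b _ hab => commute_Wz hab _ _)
  rw [Zpow, ← h1]
  have hc : Commute (Wu K e - ((k e : ℤ) : Module.End K (MvPolynomial E K)))
      ((Finset.univ.erase e).noncommProd (fun a => Wz K a (k a))
        (fun a _ b _ hab => commute_Wz hab _ _)) := by
    apply Commute.sub_left
    · exact Finset.noncommProd_commute _ _ _ _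
        (fun a ha => (commute_Wz_Wu (Finset.mem_erase.mp ha).1 (k a)).symm)
    · exact Finset.noncommProd_commute _ _ _ _
        (fun a _ => Int.cast_commute _ _)
  rw [mul_assoc, Wz_mul_Wu, ← mul_assoc, ← hc.eq, mul_assoc]

lemma Zpow_commute {f g : E → ℤ} (h : ∀ e, Commute (Wz K e (f e)) (Wz K e (g e))) :
    Commute (Zpow K f) (Zpow K g) := by
  rw [Zpow, Zpow]
  apply Finset.noncommProd_commute
  intro b _
  refine (Finset.noncommProd_commute _ _ _ _ (fun a _ => ?_)).symm
  rcases eq_or_ne a b with rfl | hab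
  · exact (h a).symm
  · exact commute_Wz hab.symm _ _

/-- The twisted generalized Weyl relations satisfied by `z^{γ_v}`, `z^{−γ_v}` and
`u_e = y_e x_e` in the Weyl algebra: (a) `z^{γ_v} u_e = (u_e − γ_{ev}) z^{γ_v}`;
(b) `z^{−γ_v} z^{γ_v} = ∏_e T_{e,v}`; (c) `z^{γ_v} z^{−γ_v} = ∏_e T'_{e,v}`;
(d) `z^{γ_i}` and `z^{−γ_j}` commute for `i ≠ j`.  These show that
`X_v ↦ z^{γ_v}`, `Y_v ↦ z^{−γ_v}`, `u_e ↦ y_e x_e` defines the canonical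
representation `φ_Γ` of `A(Γ)` by differential operators. -/
theorem phiGamma_relations {K V E : Type*} [Field K] [CharZero K]
    [Fintype E] [DecidableEq E] [Fintype V]
    (γ : E → V → ℤ) (hM : CondM γ) :
    (∀ (v : V) (e : E),
        Zpow K (fun e' => γ e' v) * Wu K e =
          (Wu K e - (γ e v) • (1 : Module.End K (MvPolynomial E K)))
            * Zpow K (fun e' => γ e' v)) ∧
      (∀ v : V,
        Zpow K (fun e => -(γ e v)) * Zpow K (fun e => γ e v) =
          Finset.univ.noncommProd (fun e => Polynomial.aeval (Wu K e) (Tpoly K (γ e v)))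
            (fun a _ b _ _ => commute_aeval_aeval (commute_Wu a b) _ _)) ∧
      (∀ v : V,
        Zpow K (fun e => γ e v) * Zpow K (fun e => -(γ e v)) =
          Finset.univ.noncommProd (fun e => Polynomial.aeval (Wu K e) (Tpoly' K (γ e v)))
            (fun a _ b _ _ => commute_aeval_aeval (commute_Wu a b) _ _)) ∧
      (∀ i j : V, i ≠ j →
        Zpow K (fun e => γ e i) * Zpow K (fun e => -(γ e j)) =
          Zpow K (fun e => -(γ e j)) * Zpow K (fun e => γ e i)) := by
  refine ⟨?_, ?_, ?_, ?_⟩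
  · intro v e
    have h := Zpow_mul_Wu (K := K) (fun e' => γ e' v) e
    rwa [zsmul_eq_mul, mul_one]
  · intro v
    rw [Zpow, Zpow, ← Finset.noncommProd_mul_distrib (s := Finset.univ)
        (fun e => Wz K e (-(γ e v))) (fun e => Wz K e (γ e v))
        (fun a _ b _ hab => commute_Wz hab _ _)
        (fun a _ b _ hab => commute_Wz hab _ _)
        (fun a _ b _ hab => commute_Wz hab _ _)]
    exact Finset.noncommProd_congr rfl
      (fun x _ => by
        simpa [Pi.mul_apply] using Wz_neg_mul_Wz (K := K) x (γ x v)) _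
  · intro v
    rw [Zpow, Zpow, ← Finset.noncommProd_mul_distrib (s := Finset.univ)
        (fun e => Wz K e (γ e v)) (fun e => Wz K e (-(γ e v)))
        (fun a _ b _ hab => commute_Wz hab _ _)
        (fun a _ b _ hab => commute_Wz hab _ _)
        (fun a _ b _ hab => commute_Wz hab _ _)]
    exact Finset.noncommProd_congr rfl
      (fun x _ => by
        simpa [Pi.mul_apply] using Wz_mul_Wz_neg (K := K) x (γ x v)) _
  · intro i j hij
    exact (Zpow_commute (fun e => commute_Wz_same e
      (by rintro ⟨h1, h2⟩; exact hij ((hM e).1 i j h1 (by omega)))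
      (by rintro ⟨h1, h2⟩; exact hij ((hM e).2 i j h1 (by omega))))).eq
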